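/- arXiv:1702.08149 — 6 statements merged into one kernel-verified Lean document; each statement's English description precedes it below -/
import Mathlib

section
/- Let F be a field with an involution c, let V be an F-vector space of finite dimension k ≥ 2, and let T : V → V be an invertible linear map whose characteristic polynomial equals its minimal polynomial and equals p(x)^d, where p is monic irreducible over F with p ∉ {x, x−1, x+1} (so T is cyclic and non-unipotent), and suppose p(x)^d is self-dual. Then there exists a T-invariant nondegenerate c-hermitian form on V. -/
open Polynomial Module

noncomputable def dualPoly {F : Type*} [Field F] (c : F →+* F) (f : Polynomial F) :
    Polynomial F :=
  (c (f.coeff 0))⁻¹ • (f.map c).reverse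

section Helpers

variable {F : Type*} [Field F]

private lemma exists_dual_one {M : Type*} [AddCommGroup M] [Module F M] {v : M} (hv : v ≠ 0) :
    ∃ μ : M →ₗ[F] F, μ v = 1 := by
  obtain ⟨g, hg⟩ := (LinearMap.toSpanSingleton F M v).exists_leftInverse_of_injective
      (LinearMap.ker_toSpanSingleton F hv)
  refine ⟨g, ?_⟩
  have := congrArg (fun φ : F →ₗ[F] F => φ 1) hg
  simpa [LinearMap.toSpanSingleton_apply] using this

private lemma exists_dual_one_zero {M : Type*} [AddCommGroup M] [Module F M] {v w : M}
    (h : v ∉ Submodule.span F {w}) : ∃ μ : M →ₗ[F] F, μ v = 1 ∧ μ w = 0 := by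
  set W := Submodule.span F {w} with hW
  have hv : W.mkQ v ≠ 0 := by
    simpa [Submodule.Quotient.mk_eq_zero] using h
  obtain ⟨g, hg⟩ := exists_dual_one (F := F) hv
  refine ⟨g.comp W.mkQ, by simpa using hg, ?_⟩
  have hw0 : W.mkQ w = 0 := (Submodule.Quotient.mk_eq_zero W).2 (Submodule.mem_span_singleton_self w)
  simp [hw0]

private lemma aeval_reverse_eq {A : Type*} [CommRing A] [Algebra F A] {x u : A}
    (hxu : x * u = 1) (h : Polynomial F) :
    aeval x h.reverse = x ^ h.natDegree * aeval u h := by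
  set n := h.natDegree with hn
  rw [aeval_eq_sum_range' (Nat.lt_succ_of_le h.reverse_natDegree_le) x,
      aeval_eq_sum_range u, Finset.mul_sum,
      ← Finset.sum_range_reflect (fun i => x ^ n * (h.coeff i • u ^ i)) (n + 1)]
  apply Finset.sum_congr rfl
  intro j hj
  have hj' : j ≤ n := Nat.lt_succ_iff.mp (Finset.mem_range.mp hj)
  have h1 : n + 1 - 1 - j = n - j := by omega
  rw [h1, coeff_reverse, revAt_le hj', mul_smul_comm]
  congr 1
  have h2 : x ^ n = x ^ j * x ^ (n - j) := by rw [← pow_add]; congr 1; omega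
  rw [h2, mul_assoc, ← mul_pow, hxu, one_pow, mul_one]

end Helpers

set_option maxHeartbeats 2000000 in
/-- Let `F` be a field with an involution `c`, `V` an `F`-vector space of
finite dimension `k ≥ 2`, and `T` an invertible linear map which is cyclic (charpoly =
minpoly = `p^d`) and non-unipotent (`p ∉ {x, x-1, x+1}`), with `p^d` self-dual. Then there
exists a `T`-invariant nondegenerate `c`-hermitian form on `V`. -/
theorem cyclic_self_dual_admits_invariant_hermitian_form
    {F : Type*} [Field F] (c : F →+* F) (hc : ∀ x, c (c x) = x)
    {V : Type*} [AddCommGroup V] [Module F V] [FiniteDimensional F V]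
    (hdim : 2 ≤ finrank F V)
    (T : V →ₗ[F] V) (hT : Function.Bijective T)
    (p : Polynomial F) (d : ℕ) (hmonic : p.Monic) (hirr : Irreducible p)
    (hpX : p ≠ X) (hpXm : p ≠ X - 1) (hpXp : p ≠ X + 1)
    (hchar : LinearMap.charpoly T = p ^ d)
    (hmin : minpoly F T = p ^ d)
    (hsd : dualPoly c (p ^ d) = p ^ d) :
    ∃ σ : V → V → F,
      (∀ u v w : V, σ (u + v) w = σ u w + σ v w) ∧
      (∀ u v w : V, σ u (v + w) = σ u v + σ u w) ∧
      (∀ (a b : F) (v w : V), σ (a • v) (b • w) = a * c b * σ v w) ∧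
      (∀ v w : V, σ v w = c (σ w v)) ∧
      (∀ v : V, (∀ w : V, σ v w = 0) → v = 0) ∧
      (∀ v w : V, σ (T v) (T w) = σ v w) := by
  classical
  set f : Polynomial F := p ^ d with hf
  have hfmonic : f.Monic := hmonic.pow d
  have hfne : f ≠ 0 := hfmonic.ne_zero
  have hpne : p ≠ 0 := hmonic.ne_zero
  have hk : f.natDegree = finrank F V := by
    rw [← hchar]; exact LinearMap.charpoly_natDegree T
  have hd1 : 1 ≤ d := by
    by_contra hd
    have hd0 : d = 0 := by omega
    have h2 : (p ^ d).natDegree = finrank F V := hk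
    rw [hd0, pow_zero, natDegree_one] at h2
    omega
  -- p(0) ≠ 0
  have hp0 : p.coeff 0 ≠ 0 := by
    intro h0
    obtain ⟨q, hq⟩ := X_dvd_iff.mpr h0
    rcases (hirr.isUnit_or_isUnit hq).resolve_left Polynomial.not_isUnit_X with hu
    obtain ⟨r, hr, hCr⟩ := Polynomial.isUnit_iff.mp hu
    have hlead : p.leadingCoeff = 1 := hmonic
    rw [hq, ← hCr] at hlead
    simp at hlead
    apply hpX
    rw [hq, ← hCr, hlead]
    simp
  have hf0 : f.coeff 0 = (p.coeff 0) ^ d := by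
    rw [coeff_zero_eq_eval_zero, hf, eval_pow, ← coeff_zero_eq_eval_zero]
  have hf0ne : f.coeff 0 ≠ 0 := by rw [hf0]; exact pow_ne_zero _ hp0
  have hcf0 : c (f.coeff 0) ≠ 0 := fun h => hf0ne (c.injective (by simpa using h))
  -- self-duality rewritten
  have hrev : (f.map c).reverse = c (f.coeff 0) • f := by
    have h1 : dualPoly c f = f := by rw [hf]; exact hsd
    rw [dualPoly] at h1
    calc (f.map c).reverse = c (f.coeff 0) • ((c (f.coeff 0))⁻¹ • (f.map c).reverse) := by
          rw [smul_smul, mul_inv_cancel₀ hcf0, one_smul]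
      _ = c (f.coeff 0) • f := by rw [h1]
  -- The algebra A = F[X]/(f)
  set A := AdjoinRoot f with hA
  set x : A := AdjoinRoot.root f with hx
  set u : A := AdjoinRoot.mk f (-(C (f.coeff 0)⁻¹ * f.divX)) with hu
  have hC1 : (C (f.coeff 0)⁻¹ : Polynomial F) * C (f.coeff 0) = 1 := by
    rw [← C_mul, inv_mul_cancel₀ hf0ne, C_1]
  have hxu : x * u = 1 := by
    have h1 : x * u = AdjoinRoot.mk f (X * (-(C (f.coeff 0)⁻¹ * f.divX))) := by
      rw [hu, hx, ← AdjoinRoot.mk_X, ← map_mul]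
    rw [h1, show (1 : A) = AdjoinRoot.mk f 1 from (map_one _).symm, ← sub_eq_zero, ← map_sub,
      AdjoinRoot.mk_eq_zero]
    refine ⟨-(C (f.coeff 0)⁻¹), ?_⟩
    have hdiv : f.divX * X + C (f.coeff 0) = f := f.divX_mul_X_add
    linear_combination (-(C (f.coeff 0)⁻¹ : Polynomial F)) * hdiv + hC1
  have haroot : aeval x f = 0 := by
    rw [aeval_def, hx, AdjoinRoot.algebraMap_eq]; exact AdjoinRoot.eval₂_root f
  -- J is well defined
  have hau : aeval u (f.map c) = 0 := by
    have hL := aeval_reverse_eq hxu (f.map c)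
    have hz : aeval x ((f.map c).reverse) = 0 := by
      rw [hrev, map_smul, haroot, smul_zero]
    have h0 : x ^ (f.map c).natDegree * aeval u (f.map c) = 0 := by rw [← hL, hz]
    have hxn : u ^ (f.map c).natDegree * x ^ (f.map c).natDegree = 1 := by
      rw [← mul_pow, mul_comm u x, hxu, one_pow]
    calc aeval u (f.map c)
        = (u ^ (f.map c).natDegree * x ^ (f.map c).natDegree) * aeval u (f.map c) := by
          rw [hxn, one_mul]
      _ = u ^ (f.map c).natDegree * (x ^ (f.map c).natDegree * aeval u (f.map c)) := by ring
      _ = 0 := by rw [h0, mul_zero]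
  have hJ0 : f.eval₂ ((AdjoinRoot.of f).comp c) u = 0 := by
    rw [← eval₂_map, ← AdjoinRoot.algebraMap_eq, ← aeval_def]
    exact hau
  set J : A →+* A := AdjoinRoot.lift ((AdjoinRoot.of f).comp c) u hJ0 with hJ
  have hJx : J x = u := AdjoinRoot.lift_root hJ0
  have hJof : ∀ α : F, J (AdjoinRoot.of f α) = AdjoinRoot.of f (c α) := by
    intro α
    rw [hJ, AdjoinRoot.lift_of hJ0, RingHom.comp_apply]
  have hJsmul : ∀ (α : F) (a : A), J (α • a) = c α • J a := by
    intro α a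
    rw [Algebra.smul_def, map_mul, AdjoinRoot.algebraMap_eq, hJof, Algebra.smul_def,
      AdjoinRoot.algebraMap_eq]
  have hJu : J u = x := by
    have h1 : J u * u = 1 := by
      have h2 : J (x * u) = 1 := by rw [hxu, map_one]
      rw [map_mul, hJx] at h2
      rw [mul_comm]; exact h2
    calc J u = J u * (x * u) := by rw [hxu, mul_one]
      _ = x * (J u * u) := by ring
      _ = x := by rw [h1, mul_one]
  have hJJ : ∀ a : A, J (J a) = a := by
    intro a
    induction a using AdjoinRoot.induction_on with
    | ih g =>
      induction g using Polynomial.induction_on' with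
      | add q r hq hr => rw [map_add, map_add, map_add, hq, hr]
      | monomial n α =>
        have hmk : AdjoinRoot.mk f (Polynomial.monomial n α)
            = AdjoinRoot.of f α * x ^ n := by
          rw [← C_mul_X_pow_eq_monomial, map_mul, map_pow, AdjoinRoot.mk_X]
          rfl
        rw [hmk, map_mul, map_mul, map_pow, map_pow, hJx, hJu, hJof, hJof, hc]
  -- the algebra map ψ : A → End(V)
  have hTaeval : aeval T f = 0 := by rw [← hmin]; exact minpoly.aeval F T
  have hker : ∀ g : Polynomial F, g ∈ Ideal.span {f} → (aeval T).toRingHom g = 0 := by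
    intro g hg
    obtain ⟨q, hq⟩ := Ideal.mem_span_singleton'.mp hg
    simp only [AlgHom.toRingHom_eq_coe, RingHom.coe_coe]
    rw [← hq, map_mul, hTaeval, mul_zero]
  set ψ : A →+* (V →ₗ[F] V) := Ideal.Quotient.lift (Ideal.span {f}) (aeval T).toRingHom hker
    with hψ
  have hψmk : ∀ g : Polynomial F, ψ (AdjoinRoot.mk f g) = aeval T g := by
    intro g; rfl
  have hψroot : ψ x = T := by
    have h1 : ψ (AdjoinRoot.mk f X) = aeval T X := hψmk X
    rw [AdjoinRoot.mk_X, ← hx, aeval_X] at h1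
    exact h1
  have hψsmul : ∀ (α : F) (a : A), ψ (α • a) = α • ψ a := by
    intro α a
    induction a using AdjoinRoot.induction_on with
    | ih g =>
      have h1 : α • AdjoinRoot.mk f g = AdjoinRoot.mk f (C α * g) := by
        rw [AdjoinRoot.smul_mk, Polynomial.smul_eq_C_mul]
      rw [h1, hψmk, map_mul, aeval_C, hψmk, ← Algebra.smul_def]
  -- choice of a cyclic-ish vector e
  have hpd1 : aeval T (p ^ (d - 1)) ≠ 0 := by
    intro h0
    have hdvd : minpoly F T ∣ p ^ (d - 1) := minpoly.dvd F T h0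
    rw [hmin, hf] at hdvd
    obtain ⟨q, hq⟩ := hdvd
    have hne : (p : Polynomial F) ^ (d - 1) ≠ 0 := pow_ne_zero _ hpne
    have hpd : (p : Polynomial F) ^ d = p ^ (d - 1) * p := by
      rw [← pow_succ]; congr 1; omega
    have h1 : (1 : Polynomial F) = p * q := by
      apply mul_left_cancel₀ hne
      rw [mul_one]
      calc (p : Polynomial F) ^ (d-1) = p ^ d * q := hq
        _ = p ^ (d-1) * (p * q) := by rw [hpd]; ring
    exact hirr.not_isUnit (IsUnit.of_mul_eq_one (a := p) q h1.symm)
  obtain ⟨e, he⟩ : ∃ e : V, aeval T (p ^ (d - 1)) e ≠ 0 := by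
    by_contra hcon
    push_neg at hcon
    exact hpd1 (LinearMap.ext fun v => hcon v)
  -- Bezout: every nonzero element of A divides m₀
  set m₀ : A := AdjoinRoot.mk f (p ^ (d - 1)) with hm₀def
  have hbez : ∀ a : A, a ≠ 0 → ∃ b : A, a * b = m₀ := by
    intro a ha
    obtain ⟨g, rfl⟩ := AdjoinRoot.mk_surjective a
    have hgf : ¬ f ∣ g := fun hdvd => ha (AdjoinRoot.mk_eq_zero.2 hdvd)
    have hg0 : g ≠ 0 := by rintro rfl; exact hgf (dvd_zero f)
    obtain ⟨i, h, hph, hgi⟩ := WfDvdMonoid.max_power_factor hg0 hirr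
    have hid : i < d := by
      by_contra hle
      push_neg at hle
      refine hgf ⟨p ^ (i - d) * h, ?_⟩
      rw [hgi, hf, ← mul_assoc, ← pow_add]
      congr 2
      omega
    have hcop : IsCoprime (p ^ d) h := (hirr.coprime_iff_not_dvd.2 hph).pow_left
    obtain ⟨α, β, hab⟩ := hcop
    refine ⟨AdjoinRoot.mk f (β * p ^ (d - 1 - i)), ?_⟩
    rw [hm₀def, ← map_mul, ← sub_eq_zero, ← map_sub, AdjoinRoot.mk_eq_zero]
    refine ⟨-(α * p ^ (d - 1)), ?_⟩
    have h1 : (p:Polynomial F) ^ i * p ^ (d - 1 - i) = p ^ (d - 1) := by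
      rw [← pow_add]; congr 1; omega
    have hfpd : f = p ^ d := hf
    linear_combination (β * p ^ (d - 1 - i)) * hgi + (β * h) * h1 + (α * p ^ (d-1)) * hfpd + p ^ (d-1) * hab
  have hm₀ : m₀ ≠ 0 := by
    rw [hm₀def, Ne, AdjoinRoot.mk_eq_zero, hf]
    intro hdvd
    obtain ⟨q, hq⟩ := hdvd
    have hne : (p : Polynomial F) ^ (d - 1) ≠ 0 := pow_ne_zero _ hpne
    have hpd : (p : Polynomial F) ^ d = p ^ (d - 1) * p := by
      rw [← pow_succ]; congr 1; omega
    have h1 : (1 : Polynomial F) = p * q := by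
      apply mul_left_cancel₀ hne
      rw [mul_one]
      calc (p : Polynomial F) ^ (d-1) = p ^ d * q := hq
        _ = p ^ (d-1) * (p * q) := by rw [hpd]; ring
    exact hirr.not_isUnit (IsUnit.of_mul_eq_one (a := p) q h1.symm)
  -- existence of a hermitian faithful functional
  have hdeg1eq : ∀ q : Polynomial F, q.Monic → q.natDegree = 1 → p ∣ q → p = q := by
    intro q hqm hq1 hdvd
    obtain ⟨r, hr⟩ := hdvd
    have hq0 : q ≠ 0 := hqm.ne_zero
    have hr0 : r ≠ 0 := by rintro rfl; rw [mul_zero] at hr; exact hq0 hr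
    have hdegs : p.natDegree + r.natDegree = 1 := by
      rw [← natDegree_mul hpne hr0, ← hr, hq1]
    have hppos : 0 < p.natDegree := hirr.natDegree_pos
    have hrdeg : r.natDegree = 0 := by omega
    have hrC : r = C (r.coeff 0) := eq_C_of_natDegree_le_zero (le_of_eq hrdeg)
    have hlead : q.leadingCoeff = p.leadingCoeff * r.leadingCoeff := by
      rw [hr, leadingCoeff_mul]
    rw [hqm.leadingCoeff, hmonic.leadingCoeff, one_mul] at hlead
    have hr1 : r.coeff 0 = 1 := by
      have h2 := hlead.symm
      rwa [leadingCoeff, hrdeg] at h2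
    have : r = 1 := by rw [hrC, hr1, C_1]
    rw [hr, this, mul_one]
  have hlam : ∃ lam : A →ₗ[F] F, (∀ a : A, lam (J a) = c (lam a)) ∧ ∃ w : A, lam (m₀ * w) ≠ 0 := by
    by_contra hno
    push_neg at hno
    have key : ∀ μ : A →ₗ[F] F, ∀ w : A, μ (m₀ * w) + c (μ (J (m₀ * w))) = 0 := by
      intro μ
      set lam : A →ₗ[F] F :=
        { toFun := fun a => μ a + c (μ (J a))
          map_add' := by
            intro a b
            show μ (a + b) + c (μ (J (a + b))) = (μ a + c (μ (J a))) + (μ b + c (μ (J b)))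
            rw [map_add, map_add, map_add, map_add]
            ring
          map_smul' := by
            intro α a
            show μ (α • a) + c (μ (J (α • a))) = α • (μ a + c (μ (J a)))
            rw [hJsmul, map_smul, map_smul, smul_eq_mul, smul_eq_mul, smul_eq_mul, map_mul, hc]
            ring } with hlamdef
      have hherm : ∀ a : A, lam (J a) = c (lam a) := by
        intro a
        show μ (J a) + c (μ (J (J a))) = c (μ a + c (μ (J a)))
        rw [hJJ, map_add, hc]
        ring
      intro w
      exact hno lam hherm w
    have hpoint : ∀ a : A, a ≠ 0 → (∀ μ : A →ₗ[F] F, μ a + c (μ (J a)) = 0) → J a = -a := by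
      intro a ha hall
      by_cases hsp : J a ∈ Submodule.span F {a}
      · obtain ⟨β, hβ⟩ := Submodule.mem_span_singleton.mp hsp
        obtain ⟨μ, hμ⟩ := exists_dual_one (F := F) ha
        have h1 := hall μ
        rw [← hβ, map_smul, smul_eq_mul, hμ, mul_one] at h1
        have hcβ : c β = -1 := by linear_combination h1
        have hβval : β = -1 := by rw [← hc β, hcβ, map_neg, map_one]
        rw [← hβ, hβval, neg_one_smul]
      · have hns : a ∉ Submodule.span F {J a} := by
          intro hmem
          obtain ⟨t, ht⟩ := Submodule.mem_span_singleton.mp hmem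
          have ht0 : t ≠ 0 := by
            rintro rfl
            rw [zero_smul] at ht
            exact ha ht.symm
          refine hsp (Submodule.mem_span_singleton.mpr ⟨t⁻¹, ?_⟩)
          conv_lhs => rw [← ht]
          rw [smul_smul, inv_mul_cancel₀ ht0, one_smul]
        obtain ⟨μ, hμ1, hμ2⟩ := exists_dual_one_zero (F := F) hns
        have h1 := hall μ
        rw [hμ1, hμ2, map_zero, add_zero] at h1
        exact absurd h1 one_ne_zero
    have hJm0 : J m₀ = -m₀ := by
      apply hpoint m₀ hm₀
      intro μ
      have := key μ 1
      rwa [mul_one] at this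
    have hxm0ne : x * m₀ ≠ 0 := by
      intro h0
      apply hm₀
      calc m₀ = (u * x) * m₀ := by rw [mul_comm u x, hxu, one_mul]
        _ = u * (x * m₀) := by ring
        _ = 0 := by rw [h0, mul_zero]
    have hJxm0 : J (x * m₀) = -(x * m₀) := by
      apply hpoint _ hxm0ne
      intro μ
      have := key μ x
      rwa [mul_comm m₀ x] at this
    have h5 : u * m₀ = x * m₀ := by
      have h5a : u * -m₀ = -(x * m₀) := by rw [← hJm0, ← hJx, ← map_mul]; exact hJxm0
      rw [mul_neg] at h5a
      exact neg_injective h5a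
    have h6 : m₀ = x ^ 2 * m₀ := by
      calc m₀ = (x * u) * m₀ := by rw [hxu, one_mul]
        _ = x * (u * m₀) := by ring
        _ = x * (x * m₀) := by rw [h5]
        _ = x ^ 2 * m₀ := by ring
    have h7 : AdjoinRoot.mk f ((X ^ 2 - 1) * p ^ (d - 1)) = 0 := by
      rw [map_mul, map_sub, map_pow, map_one, AdjoinRoot.mk_X, ← hx, ← hm₀def, sub_mul, one_mul,
        ← h6, sub_self]
    rw [AdjoinRoot.mk_eq_zero, hf] at h7
    obtain ⟨q, hq⟩ := h7
    have hcancel : (X : Polynomial F) ^ 2 - 1 = p * q := by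
      apply mul_right_cancel₀ (pow_ne_zero (d - 1) hpne)
      have hpd : (p : Polynomial F) ^ d = p * p ^ (d - 1) := by
        rw [← pow_succ']; congr 1; omega
      calc ((X:Polynomial F) ^ 2 - 1) * p ^ (d-1) = p ^ d * q := hq
        _ = (p * q) * p ^ (d-1) := by rw [hpd]; ring
    have hprime : Prime p := UniqueFactorizationMonoid.irreducible_iff_prime.mp hirr
    have hdvd2 : p ∣ (X - 1) * (X + 1) := ⟨q, by rw [← hcancel]; ring⟩
    rcases hprime.2.2 _ _ hdvd2 with hdv | hdv
    · refine hpXm (hdeg1eq (X - 1) ?_ ?_ hdv)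
      · simpa using monic_X_sub_C (1 : F)
      · simpa using natDegree_X_sub_C (1 : F)
    · refine hpXp (hdeg1eq (X + 1) ?_ ?_ hdv)
      · simpa using monic_X_add_C (1 : F)
      · simpa using natDegree_X_add_C (1 : F)
  obtain ⟨lam, hherm, w₀, hw₀⟩ := hlam
  -- the linear isomorphism Φ : A ≃ V
  haveI hFD : Module.Finite F A := Module.Finite.of_basis (AdjoinRoot.powerBasis hfne).basis
  set Φ₀ : A →ₗ[F] V :=
    { toFun := fun a => ψ a e
      map_add' := by
        intro a b
        show ψ (a + b) e = ψ a e + ψ b e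
        rw [map_add]; rfl
      map_smul' := by
        intro α a
        show ψ (α • a) e = α • ψ a e
        rw [hψsmul]; rfl } with hΦ₀
  have hΦ₀apply : ∀ a : A, Φ₀ a = ψ a e := fun a => rfl
  have hΦinj : Function.Injective Φ₀ := by
    have hzero : ∀ z : A, Φ₀ z = 0 → z = 0 := by
      intro z hz
      by_contra hz0
      obtain ⟨b, hb⟩ := hbez z hz0
      have h1 : ψ (z * b) e = 0 := by
        rw [mul_comm, map_mul, Module.End.mul_apply]
        rw [hΦ₀apply] at hz
        rw [hz, map_zero]
      rw [hb, hm₀def, hψmk] at h1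
      exact he h1
    intro a b hab
    have := hzero (a - b) (by rw [map_sub, hab, sub_self])
    exact sub_eq_zero.mp this
  have hfinrank : finrank F A = finrank F V := by
    rw [← hk]
    rw [Module.finrank_eq_card_basis (AdjoinRoot.powerBasis hfne).basis]
    rw [Fintype.card_fin]
    rfl
  set Φ : A ≃ₗ[F] V := Φ₀.linearEquivOfInjective hΦinj hfinrank with hΦdef
  have hΦapply : ∀ a : A, Φ a = ψ a e := fun a => rfl
  have hcomm : ∀ a : A, Φ (x * a) = T (Φ a) := by
    intro a
    rw [hΦapply, hΦapply, map_mul, Module.End.mul_apply, hψroot]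
  have hsymmT : ∀ v : V, Φ.symm (T v) = x * Φ.symm v := by
    intro v
    apply Φ.injective
    rw [Φ.apply_symm_apply, hcomm, Φ.apply_symm_apply]
  -- the form
  refine ⟨fun v w => lam (Φ.symm v * J (Φ.symm w)), ?_, ?_, ?_, ?_, ?_, ?_⟩
  · intro a b w
    show lam (Φ.symm (a + b) * J (Φ.symm w))
        = lam (Φ.symm a * J (Φ.symm w)) + lam (Φ.symm b * J (Φ.symm w))
    rw [map_add, add_mul, map_add]
  · intro a v w
    show lam (Φ.symm a * J (Φ.symm (v + w)))
        = lam (Φ.symm a * J (Φ.symm v)) + lam (Φ.symm a * J (Φ.symm w))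
    rw [map_add, map_add, mul_add, map_add]
  · intro a b v w
    show lam (Φ.symm (a • v) * J (Φ.symm (b • w))) = a * c b * lam (Φ.symm v * J (Φ.symm w))
    rw [map_smul, map_smul, hJsmul, smul_mul_smul_comm, map_smul, smul_eq_mul]
  · intro v w
    show lam (Φ.symm v * J (Φ.symm w)) = c (lam (Φ.symm w * J (Φ.symm v)))
    rw [← hherm (Φ.symm w * J (Φ.symm v)), J.map_mul, hJJ, mul_comm]
  · intro v hv
    have hall : ∀ b : A, lam (Φ.symm v * b) = 0 := by
      intro b
      have h2 : lam (Φ.symm v * J (Φ.symm (Φ (J b)))) = 0 := hv (Φ (J b))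
      rwa [Φ.symm_apply_apply, hJJ] at h2
    by_contra hv0
    have hsv : Φ.symm v ≠ 0 := by
      intro h0
      apply hv0
      have := congrArg Φ h0
      rwa [Φ.apply_symm_apply, map_zero] at this
    obtain ⟨b, hb⟩ := hbez _ hsv
    have h1 : lam (Φ.symm v * (b * w₀)) = 0 := hall _
    rw [← mul_assoc, hb] at h1
    exact hw₀ h1
  · intro v w
    show lam (Φ.symm (T v) * J (Φ.symm (T w))) = lam (Φ.symm v * J (Φ.symm w))
    rw [hsymmT, hsymmT, J.map_mul, hJx]
    have h2 : x * Φ.symm v * (u * J (Φ.symm w)) = (x * u) * (Φ.symm v * J (Φ.symm w)) := by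
      ring
    rw [h2, hxu, one_mul]
end

section
/- Let F be a field with a nontrivial involution c, let V be an F-vector space of finite dimension k ≥ 2, and let T : V → V be an invertible linear map whose characteristic polynomial equals its minimal polynomial and equals p(x)^d, with p monic irreducible over F, p ∉ {x, x−1, x+1}, and p(x)^d self-dual. Then there exists a T-invariant nondegenerate c-hermitian form on V; and if moreover char(F) ≠ 2, there also exists a T-invariant nondegenerate c-skew-hermitian form on V. -/
open Polynomial Module

section Aux

variable {F : Type*} [Field F]

/-- The root of `f` is invertible in `AdjoinRoot f` when `f` has nonzero constant term. -/
private theorem aux_root_inv (f : Polynomial F) (ha0 : f.coeff 0 ≠ 0) :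
    AdjoinRoot.root f * AdjoinRoot.mk f (C (-(f.coeff 0))⁻¹ * f.divX) = 1 := by
  have h1 : AdjoinRoot.root f * AdjoinRoot.mk f (C (-(f.coeff 0))⁻¹ * f.divX) =
      (AdjoinRoot.mk f) (X * (C (-(f.coeff 0))⁻¹ * f.divX)) := by
    rw [← AdjoinRoot.mk_X, ← map_mul]
  have h2 : X * (C (-(f.coeff 0))⁻¹ * f.divX) = C (-(f.coeff 0))⁻¹ * (X * f.divX) := by ring
  have h3 : X * f.divX = f - C (f.coeff 0) := by
    rw [eq_sub_iff_add_eq]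
    exact Polynomial.X_mul_divX_add f
  rw [h1, h2, h3, map_mul, map_sub, AdjoinRoot.mk_self, zero_sub, ← map_neg, ← map_mul,
    ← Polynomial.C_neg, ← Polynomial.C_mul,
    inv_mul_cancel₀ (neg_ne_zero.mpr ha0), Polynomial.C_1, map_one]

/-- The `c`-semilinear "bar" involution of `AdjoinRoot f`, sending the root to its
inverse, which exists when `f` is (projectively) self-dual w.r.t. `c`. -/
private theorem aux_bar (c : F →+* F) (hc : ∀ x, c (c x) = x) (f : Polynomial F)
    (ha0 : f.coeff 0 ≠ 0) (hrev : (f.map c).reverse = c (f.coeff 0) • f) :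
    ∃ (bar : AdjoinRoot f →+* AdjoinRoot f) (y : AdjoinRoot f),
      AdjoinRoot.root f * y = 1 ∧ bar (AdjoinRoot.root f) = y ∧
      (∀ a, bar (bar a) = a) ∧
      (∀ (α : F) (x : AdjoinRoot f), bar (α • x) = c α • bar x) := by
  set y : AdjoinRoot f := AdjoinRoot.mk f (C (-(f.coeff 0))⁻¹ * f.divX) with hy
  have hyroot : AdjoinRoot.root f * y = 1 := aux_root_inv f ha0
  letI : Invertible y := ⟨AdjoinRoot.root f, hyroot, by rw [mul_comm]; exact hyroot⟩
  have hfcy : Polynomial.eval₂ (AdjoinRoot.of f) y (f.map c) = 0 := by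
    rw [← Polynomial.eval₂_reverse_eq_zero_iff (AdjoinRoot.of f) y]
    have hinv : (⅟ y : AdjoinRoot f) = AdjoinRoot.root f := rfl
    rw [hinv, hrev, Polynomial.eval₂_smul, AdjoinRoot.eval₂_root, mul_zero]
  have hfy : Polynomial.eval₂ ((AdjoinRoot.of f).comp c) y f = 0 := by
    rw [Polynomial.eval₂_map] at hfcy
    exact hfcy
  set bar : AdjoinRoot f →+* AdjoinRoot f :=
    AdjoinRoot.lift ((AdjoinRoot.of f).comp c) y hfy with hbar
  have bar_of : ∀ x : F, bar (AdjoinRoot.of f x) = AdjoinRoot.of f (c x) := by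
    intro x
    have hofx : AdjoinRoot.of f x = AdjoinRoot.mk f (C x) := rfl
    rw [hofx, hbar, AdjoinRoot.lift_mk, Polynomial.eval₂_C]
    rfl
  have bar_root : bar (AdjoinRoot.root f) = y := by
    rw [hbar]; exact AdjoinRoot.lift_root hfy
  have bar_y : bar y = AdjoinRoot.root f := by
    have h1 : bar (AdjoinRoot.root f * y) = 1 := by rw [hyroot, map_one]
    rw [map_mul, bar_root] at h1
    calc bar y = (AdjoinRoot.root f * y) * bar y := by rw [hyroot, one_mul]
      _ = AdjoinRoot.root f * (y * bar y) := by ring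
      _ = AdjoinRoot.root f := by rw [h1, mul_one]
  refine ⟨bar, y, hyroot, bar_root, ?_, ?_⟩
  · intro a
    obtain ⟨q, rfl⟩ := AdjoinRoot.mk_surjective a
    induction q using Polynomial.induction_on with
    | C x =>
      rw [AdjoinRoot.mk_C]
      calc bar (bar ((AdjoinRoot.of f) x)) = AdjoinRoot.of f (c (c x)) := by
            rw [bar_of, bar_of]
        _ = _ := by rw [hc]
    | add q r hq hr =>
      rw [map_add, map_add, map_add, hq, hr]
    | monomial n x ih =>
      have hsplit : AdjoinRoot.mk f (C x * X ^ (n + 1)) =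
          AdjoinRoot.mk f (C x * X ^ n) * AdjoinRoot.root f := by
        rw [← AdjoinRoot.mk_X, ← map_mul]
        ring_nf
      rw [hsplit, map_mul, map_mul, bar_root, bar_y, ih]
  · intro α x
    rw [Algebra.smul_def, Algebra.smul_def, map_mul, AdjoinRoot.algebraMap_eq, bar_of]

/-- The comparison isomorphism `AdjoinRoot f ≃ V` given a cyclic vector. -/
private theorem aux_phi {V : Type*} [AddCommGroup V] [Module F V] [FiniteDimensional F V]
    (T : V →ₗ[F] V) (f : Polynomial F) (hf0 : f ≠ 0)
    (hdegf : f.natDegree = finrank F V)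
    (haevalf : Polynomial.aeval T f = 0) (v₀ : V)
    (hker : ∀ q : Polynomial F, (Polynomial.aeval T q) v₀ = 0 → f ∣ q) :
    ∃ Φe : AdjoinRoot f ≃ₗ[F] V, ∀ a, Φe (AdjoinRoot.root f * a) = T (Φe a) := by
  have hfann : ∀ q ∈ Ideal.span {f}, (Polynomial.aeval T (R := F)).toRingHom q = 0 := by
    intro q hq
    obtain ⟨r, rfl⟩ := Ideal.mem_span_singleton'.mp hq
    show Polynomial.aeval T (r * f) = 0
    rw [map_mul, haevalf, mul_zero]
  set θ : AdjoinRoot f →+* Module.End F V :=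
    Ideal.Quotient.lift (Ideal.span {f}) (Polynomial.aeval T).toRingHom hfann with hθ
  have hθmk : ∀ q, θ (AdjoinRoot.mk f q) = Polynomial.aeval T q := by
    intro q
    exact Ideal.Quotient.lift_mk _ _ _
  have hθsmul : ∀ (r : F) (a : AdjoinRoot f), θ (r • a) = r • θ a := by
    intro r a
    obtain ⟨q, rfl⟩ := AdjoinRoot.mk_surjective a
    rw [AdjoinRoot.smul_mk, hθmk, hθmk, map_smul]
  set Φ : AdjoinRoot f →ₗ[F] V :=
    { toFun := fun a => θ a v₀
      map_add' := fun a b => by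
        show θ (a + b) v₀ = θ a v₀ + θ b v₀
        rw [map_add]; rfl
      map_smul' := fun r a => by
        show θ (r • a) v₀ = r • θ a v₀
        rw [hθsmul]; rfl } with hΦdef
  have hΦmk : ∀ q, Φ (AdjoinRoot.mk f q) = (Polynomial.aeval T q) v₀ := by
    intro q
    show θ (AdjoinRoot.mk f q) v₀ = _
    rw [hθmk]
  have hΦroot : ∀ a, Φ (AdjoinRoot.root f * a) = T (Φ a) := by
    intro a
    show θ (AdjoinRoot.root f * a) v₀ = T (θ a v₀)
    have hroot : θ (AdjoinRoot.root f) = T := by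
      rw [← AdjoinRoot.mk_X, hθmk, Polynomial.aeval_X]
    rw [map_mul, hroot]
    rfl
  have hΦinj : Function.Injective Φ := by
    rw [injective_iff_map_eq_zero]
    intro a ha
    obtain ⟨q, rfl⟩ := AdjoinRoot.mk_surjective a
    rw [hΦmk] at ha
    exact AdjoinRoot.mk_eq_zero.mpr (hker q ha)
  haveI : Module.Finite F (AdjoinRoot f) :=
    Module.Finite.of_basis (AdjoinRoot.powerBasis hf0).basis
  have hfrA : finrank F (AdjoinRoot f) = finrank F V := by
    rw [PowerBasis.finrank (AdjoinRoot.powerBasis hf0), AdjoinRoot.powerBasis_dim]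
    exact hdegf
  have hΦbij : Function.Bijective Φ :=
    ⟨hΦinj, (LinearMap.injective_iff_surjective_of_finrank_eq_finrank hfrA).mp hΦinj⟩
  exact ⟨LinearEquiv.ofBijective Φ hΦbij, hΦroot⟩

/-- Existence of a functional `lam` with `lam ∘ bar = c ∘ lam` not vanishing on `s·A`. -/
private theorem aux_lam (c : F →+* F) (hc : ∀ x, c (c x) = x) (hnt : ∃ x : F, c x ≠ x)
    {A : Type*} [CommRing A] [Algebra F A]
    (bar : A →+* A) (bar_bar : ∀ a, bar (bar a) = a)
    (bar_smul : ∀ (α : F) (x : A), bar (α • x) = c α • bar x)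
    (s : A) (hs0 : s ≠ 0) :
    ∃ lam : A → F,
      (∀ x z, lam (x + z) = lam x + lam z) ∧
      (∀ (α : F) (x : A), lam (α • x) = α * lam x) ∧
      (∀ x, lam (bar x) = c (lam x)) ∧
      ∃ w, lam (s * w) ≠ 0 := by
  obtain ⟨μ, hμ⟩ : ∃ μ : Module.Dual F A, μ s ≠ 0 := by
    by_contra h
    push_neg at h
    exact hs0 ((Module.forall_dual_apply_eq_zero_iff F s).mp h)
  obtain ⟨β, hβ⟩ : ∃ β : F, β + c β = 1 := by
    by_cases htr : ∃ x : F, x + c x ≠ 0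
    · obtain ⟨x, hx⟩ := htr
      refine ⟨x / (x + c x), ?_⟩
      have hcs : c (x + c x) = x + c x := by rw [map_add, hc]; ring
      have hcd : c (x / (x + c x)) = c x / (x + c x) := by rw [map_div₀, hcs]
      rw [hcd, ← add_div, div_self hx]
    · push_neg at htr
      exfalso
      obtain ⟨x, hx⟩ := hnt
      have h1 := htr 1
      rw [map_one] at h1
      have hx2 := htr x
      apply hx
      have hcx : c x = -x := by linear_combination hx2
      rw [hcx]
      linear_combination (-x) * h1
  have hβ0 : β ≠ 0 := by
    intro h
    rw [h, map_zero, add_zero] at hβ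
    exact one_ne_zero hβ.symm
  obtain ⟨γ, hγ⟩ := hnt
  by_cases hcase : ∃ w, β * μ (s * w) + c β * c (μ (bar (s * w))) ≠ 0
  · obtain ⟨w, hw⟩ := hcase
    refine ⟨fun x => β * μ x + c β * c (μ (bar x)), ?_, ?_, ?_, w, hw⟩
    · intro x z
      simp only [map_add]
      ring
    · intro α x
      simp only [bar_smul, map_smul, smul_eq_mul, map_mul, hc]
      ring
    · intro x
      simp only [bar_bar, map_add, map_mul, hc]
      ring
  · push_neg at hcase
    refine ⟨fun x => (β * c γ) * μ x + (c β * γ) * c (μ (bar x)), ?_, ?_, ?_, 1, ?_⟩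
    · intro x z
      simp only [map_add]
      ring
    · intro α x
      simp only [bar_smul, map_smul, smul_eq_mul, map_mul, hc]
      ring
    · intro x
      simp only [bar_bar, map_add, map_mul, hc]
      ring
    · intro hzero
      have e1 := hcase 1
      rw [mul_one] at e1
      have hzero' : (β * c γ) * μ (s * 1) + (c β * γ) * c (μ (bar (s * 1))) = 0 := hzero
      rw [mul_one] at hzero'
      apply hμ
      have h3 : (β * (γ - c γ)) * μ s = 0 := by
        linear_combination γ * e1 - hzero'
      have hne : β * (γ - c γ) ≠ 0 := mul_ne_zero hβ0 (sub_ne_zero.mpr (Ne.symm hγ))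
      exact (mul_eq_zero.mp h3).resolve_left hne

/-- The main construction of the sesquilinear form, parametrized by the sign `ε`. -/
private theorem aux_form (c : F →+* F) (hc : ∀ x, c (c x) = x)
    {V : Type*} [AddCommGroup V] [Module F V]
    (T : V →ₗ[F] V) (f : Polynomial F)
    (bar : AdjoinRoot f →+* AdjoinRoot f) (y : AdjoinRoot f)
    (hyroot : AdjoinRoot.root f * y = 1)
    (bar_root : bar (AdjoinRoot.root f) = y)
    (bar_bar : ∀ a, bar (bar a) = a)
    (bar_smul : ∀ (α : F) (x : AdjoinRoot f), bar (α • x) = c α • bar x)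
    (Φe : AdjoinRoot f ≃ₗ[F] V)
    (hΦroot : ∀ a, Φe (AdjoinRoot.root f * a) = T (Φe a))
    (s : AdjoinRoot f)
    (hideal : ∀ a : AdjoinRoot f, a ≠ 0 → ∃ b, a * b = s)
    (lam : AdjoinRoot f → F)
    (hadd : ∀ x z, lam (x + z) = lam x + lam z)
    (hsmul : ∀ (α : F) (x : AdjoinRoot f), lam (α • x) = α * lam x)
    (hexw : ∃ w, lam (s * w) ≠ 0)
    (ε : F) (hcε : c ε = ε) (hε2 : ε * ε = 1)
    (hconj : ∀ x, lam (bar x) = ε * c (lam x)) :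
    ∃ σ : V → V → F,
      (∀ u v w : V, σ (u + v) w = σ u w + σ v w) ∧
      (∀ u v w : V, σ u (v + w) = σ u v + σ u w) ∧
      (∀ (a b : F) (v w : V), σ (a • v) (b • w) = a * c b * σ v w) ∧
      (∀ v w : V, σ v w = ε * c (σ w v)) ∧
      (∀ v : V, (∀ w : V, σ v w = 0) → v = 0) ∧
      (∀ v w : V, σ (T v) (T w) = σ v w) := by
  obtain ⟨wit, hwit⟩ := hexw
  set Ψ : V ≃ₗ[F] AdjoinRoot f := Φe.symm with hΨ
  have hΨT : ∀ v : V, Ψ (T v) = AdjoinRoot.root f * Ψ v := by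
    intro v
    rw [hΨ, LinearEquiv.symm_apply_eq, hΦroot]
    congr 1
    exact (Φe.apply_symm_apply v).symm
  refine ⟨fun v w => lam (Ψ v * bar (Ψ w)), ?_, ?_, ?_, ?_, ?_, ?_⟩
  · intro u v w
    show lam (Ψ (u + v) * bar (Ψ w)) = lam (Ψ u * bar (Ψ w)) + lam (Ψ v * bar (Ψ w))
    rw [map_add, add_mul, hadd]
  · intro u v w
    show lam (Ψ u * bar (Ψ (v + w))) = lam (Ψ u * bar (Ψ v)) + lam (Ψ u * bar (Ψ w))
    rw [map_add, map_add, mul_add, hadd]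
  · intro a b v w
    show lam (Ψ (a • v) * bar (Ψ (b • w))) = a * c b * lam (Ψ v * bar (Ψ w))
    have h1 : Ψ (a • v) * bar (Ψ (b • w)) = (a * c b) • (Ψ v * bar (Ψ w)) := by
      rw [map_smul, map_smul, bar_smul, smul_mul_assoc, mul_smul_comm, smul_smul]
    rw [h1, hsmul]
  · intro v w
    show lam (Ψ v * bar (Ψ w)) = ε * c (lam (Ψ w * bar (Ψ v)))
    have hz : bar (Ψ v * bar (Ψ w)) = Ψ w * bar (Ψ v) := by
      rw [map_mul, bar_bar, mul_comm]
    have h4 : c (lam (Ψ w * bar (Ψ v))) = ε * lam (Ψ v * bar (Ψ w)) := by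
      rw [← hz, hconj, map_mul, hcε, hc]
    rw [h4, ← mul_assoc, hε2, one_mul]
  · intro v hv
    by_contra hv0
    have hx : Ψ v ≠ 0 := fun h => hv0 (by
      have h2 := congrArg Φe h
      rw [Φe.apply_symm_apply, map_zero] at h2
      exact h2)
    obtain ⟨b, hb⟩ := hideal (Ψ v) hx
    have hv' : lam (Ψ v * bar (Ψ (Φe (bar (b * wit))))) = 0 := hv (Φe (bar (b * wit)))
    have hΨΦ : Ψ (Φe (bar (b * wit))) = bar (b * wit) := Φe.symm_apply_apply _
    rw [hΨΦ, bar_bar, ← mul_assoc, hb] at hv'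
    exact hwit hv'
  · intro v w
    show lam (Ψ (T v) * bar (Ψ (T w))) = lam (Ψ v * bar (Ψ w))
    rw [hΨT, hΨT, map_mul, bar_root]
    have h5 : (AdjoinRoot.root f * Ψ v) * (y * bar (Ψ w)) =
        (AdjoinRoot.root f * y) * (Ψ v * bar (Ψ w)) := by ring
    rw [h5, hyroot, one_mul]

end Aux

/-- Let `F` be a field with a nontrivial involution `c`, `V` an `F`-vector
space of finite dimension `k ≥ 2`, and `T` invertible, cyclic (charpoly = minpoly = `p^d`),
with `p` monic irreducible, `p ∉ {x, x-1, x+1}`, and `p^d` self-dual. Then `V` admits a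
`T`-invariant nondegenerate `c`-hermitian form; and if moreover `char F ≠ 2`, `V` also
admits a `T`-invariant nondegenerate `c`-skew-hermitian form. -/
theorem cyclic_self_dual_admits_hermitian_and_skew_hermitian_form
    {F : Type*} [Field F] (c : F →+* F) (hc : ∀ x, c (c x) = x)
    (hnt : ∃ x : F, c x ≠ x)
    {V : Type*} [AddCommGroup V] [Module F V] [FiniteDimensional F V]
    (hdim : 2 ≤ finrank F V)
    (T : V →ₗ[F] V) (hT : Function.Bijective T)
    (p : Polynomial F) (d : ℕ) (hmonic : p.Monic) (hirr : Irreducible p)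
    (hpX : p ≠ X) (hpXm : p ≠ X - 1) (hpXp : p ≠ X + 1)
    (hchar : LinearMap.charpoly T = p ^ d)
    (hmin : minpoly F T = p ^ d)
    (hsd : dualPoly c (p ^ d) = p ^ d) :
    (∃ σ : V → V → F,
      (∀ u v w : V, σ (u + v) w = σ u w + σ v w) ∧
      (∀ u v w : V, σ u (v + w) = σ u v + σ u w) ∧
      (∀ (a b : F) (v w : V), σ (a • v) (b • w) = a * c b * σ v w) ∧
      (∀ v w : V, σ v w = c (σ w v)) ∧
      (∀ v : V, (∀ w : V, σ v w = 0) → v = 0) ∧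
      (∀ v w : V, σ (T v) (T w) = σ v w)) ∧
    (ringChar F ≠ 2 →
      ∃ σ : V → V → F,
        (∀ u v w : V, σ (u + v) w = σ u w + σ v w) ∧
        (∀ u v w : V, σ u (v + w) = σ u v + σ u w) ∧
        (∀ (a b : F) (v w : V), σ (a • v) (b • w) = a * c b * σ v w) ∧
        (∀ v w : V, σ v w = - c (σ w v)) ∧
        (∀ v : V, (∀ w : V, σ v w = 0) → v = 0) ∧
        (∀ v w : V, σ (T v) (T w) = σ v w)) := by
  classical
  have hfmonic : (p ^ d).Monic := hmonic.pow d
  have hf0 : p ^ d ≠ 0 := hfmonic.ne_zero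
  have hdegf : (p ^ d).natDegree = finrank F V := by
    have h := LinearMap.charpoly_natDegree (f := T)
    rw [hchar] at h
    exact h
  have hpm : 1 ≤ p.natDegree := by
    rcases Nat.lt_or_ge p.natDegree 1 with h | h
    · exact absurd ((hmonic.natDegree_eq_zero.mp (by omega)) ▸ isUnit_one)
        hirr.not_isUnit
    · exact h
  have hd : 1 ≤ d := by
    by_contra h
    have hd0 : d = 0 := by omega
    rw [hd0, pow_zero, natDegree_one] at hdegf
    omega
  have hp0 : p.coeff 0 ≠ 0 := by
    intro h0
    obtain ⟨q, hq⟩ := Polynomial.X_dvd_iff.mpr h0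
    rcases hirr.isUnit_or_isUnit hq with h1 | h2
    · exact Polynomial.not_isUnit_X h1
    · obtain ⟨r, hr, hCr⟩ := Polynomial.isUnit_iff.mp h2
      apply hpX
      have hl : p.leadingCoeff = 1 := hmonic
      rw [hq, ← hCr, leadingCoeff_mul, leadingCoeff_X, one_mul, leadingCoeff_C] at hl
      rw [hq, ← hCr, hl, Polynomial.C_1, mul_one]
  have ha0 : (p ^ d).coeff 0 ≠ 0 := by
    have hcp : (p ^ d).coeff 0 = (p.coeff 0) ^ d := by
      simp only [Polynomial.coeff_zero_eq_eval_zero, Polynomial.eval_pow]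
    rw [hcp]
    exact pow_ne_zero _ hp0
  have hndvd : ¬ (p ^ d ∣ p ^ (d - 1)) := by
    intro hdvd
    have hle := Polynomial.natDegree_le_of_dvd hdvd (pow_ne_zero _ hmonic.ne_zero)
    rw [hmonic.natDegree_pow, hmonic.natDegree_pow] at hle
    have h2 : d ≤ d - 1 := Nat.le_of_mul_le_mul_right hle (by omega : 0 < p.natDegree)
    omega
  have haevalf : Polynomial.aeval T (p ^ d) = 0 := by
    rw [← hmin]; exact minpoly.aeval F T
  obtain ⟨v₀, hv₀⟩ : ∃ v : V, (Polynomial.aeval T (p ^ (d - 1))) v ≠ 0 := by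
    by_contra h
    push_neg at h
    exact (fun h' => hndvd (hmin ▸ minpoly.dvd F T h')) (LinearMap.ext h)
  have key : ∀ q : Polynomial F, ¬ p ^ d ∣ q →
      ∃ h : Polynomial F, p ^ (d - 1) = EuclideanDomain.gcd q (p ^ d) * h := by
    intro q hq
    have hgd : EuclideanDomain.gcd q (p ^ d) ∣ p ^ d := EuclideanDomain.gcd_dvd_right q (p ^ d)
    obtain ⟨e, he, hassoc⟩ := (dvd_prime_pow hirr.prime d).mp hgd
    have hed : e ≤ d - 1 := by
      by_contra h1
      have hede : e = d := by omega
      rw [hede] at hassoc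
      exact hq (hassoc.symm.dvd.trans (EuclideanDomain.gcd_dvd_left q (p ^ d)))
    obtain ⟨u, hu⟩ := hassoc
    refine ⟨(u : Polynomial F) * p ^ (d - 1 - e), ?_⟩
    rw [← mul_assoc, hu, ← pow_add]
    congr 1
    omega
  have hker : ∀ q : Polynomial F, (Polynomial.aeval T q) v₀ = 0 → p ^ d ∣ q := by
    intro q hq0
    by_contra hq
    obtain ⟨h, hh⟩ := key q hq
    apply hv₀
    have hg : (Polynomial.aeval T (EuclideanDomain.gcd q (p ^ d))) v₀ = 0 := by
      rw [EuclideanDomain.gcd_eq_gcd_ab q (p ^ d), mul_comm q _, mul_comm (p ^ d) _]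
      simp only [map_add, map_mul, LinearMap.add_apply, Module.End.mul_apply, hq0,
        haevalf, map_zero, LinearMap.zero_apply, add_zero]
    rw [hh, mul_comm, map_mul, Module.End.mul_apply, hg, map_zero]
  -- the comparison isomorphism
  obtain ⟨Φe, hΦroot⟩ := aux_phi T (p ^ d) hf0 hdegf haevalf v₀ hker
  -- the bar involution
  have hrevfc : ((p ^ d).map c).reverse = c ((p ^ d).coeff 0) • (p ^ d) := by
    have h : (c ((p ^ d).coeff 0))⁻¹ • ((p ^ d).map c).reverse = p ^ d := hsd
    have hca0 : c ((p ^ d).coeff 0) ≠ 0 := fun h0 => ha0 (by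
      exact c.injective (h0.trans (map_zero c).symm))
    calc ((p ^ d).map c).reverse
        = c ((p ^ d).coeff 0) • ((c ((p ^ d).coeff 0))⁻¹ • ((p ^ d).map c).reverse) := by
          rw [smul_smul, mul_inv_cancel₀ hca0, one_smul]
      _ = c ((p ^ d).coeff 0) • (p ^ d) := by rw [h]
  obtain ⟨bar, y, hyroot, bar_root, bar_bar, bar_smul⟩ := aux_bar c hc (p ^ d) ha0 hrevfc
  -- the socle generator and the ideal property
  have hs0 : AdjoinRoot.mk (p ^ d) (p ^ (d - 1)) ≠ 0 :=
    fun h => hndvd (AdjoinRoot.mk_eq_zero.mp h)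
  have hideal : ∀ a : AdjoinRoot (p ^ d), a ≠ 0 →
      ∃ b, a * b = AdjoinRoot.mk (p ^ d) (p ^ (d - 1)) := by
    intro a ha
    obtain ⟨q, rfl⟩ := AdjoinRoot.mk_surjective a
    have hq : ¬ p ^ d ∣ q := fun h => ha (AdjoinRoot.mk_eq_zero.mpr h)
    obtain ⟨h, hh⟩ := key q hq
    refine ⟨AdjoinRoot.mk (p ^ d) (EuclideanDomain.gcdA q (p ^ d) * h), ?_⟩
    rw [← map_mul]
    apply AdjoinRoot.mk_eq_mk.mpr
    refine ⟨-(EuclideanDomain.gcdB q (p ^ d) * h), ?_⟩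
    rw [hh, EuclideanDomain.gcd_eq_gcd_ab q (p ^ d)]
    ring
  -- the hermitian functional
  obtain ⟨lam, hladd, hlsmul, hlconj, hlex⟩ :=
    aux_lam c hc hnt bar bar_bar bar_smul (AdjoinRoot.mk (p ^ d) (p ^ (d - 1))) hs0
  obtain ⟨γ, hγ⟩ := hnt
  constructor
  · obtain ⟨σ, h1, h2, h3, h4, h5, h6⟩ :=
      aux_form c hc T (p ^ d) bar y hyroot bar_root bar_bar bar_smul Φe hΦroot
        (AdjoinRoot.mk (p ^ d) (p ^ (d - 1))) hideal lam hladd hlsmul hlex 1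
        (map_one c) (one_mul 1) (fun x => by rw [one_mul]; exact hlconj x)
    exact ⟨σ, h1, h2, h3, fun v w => by rw [h4 v w, one_mul], h5, h6⟩
  · intro _
    have hα0 : γ - c γ ≠ 0 := sub_ne_zero.mpr (Ne.symm hγ)
    have hcα : c (γ - c γ) = -(γ - c γ) := by rw [map_sub, hc]; ring
    obtain ⟨w₁, hw₁⟩ := hlex
    obtain ⟨σ, h1, h2, h3, h4, h5, h6⟩ :=
      aux_form c hc T (p ^ d) bar y hyroot bar_root bar_bar bar_smul Φe hΦroot
        (AdjoinRoot.mk (p ^ d) (p ^ (d - 1))) hideal (fun x => (γ - c γ) * lam x)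
        (fun x z => by
          show (γ - c γ) * lam (x + z) = (γ - c γ) * lam x + (γ - c γ) * lam z
          rw [hladd]; ring)
        (fun a x => by
          show (γ - c γ) * lam (a • x) = a * ((γ - c γ) * lam x)
          rw [hlsmul]; ring)
        ⟨w₁, mul_ne_zero hα0 hw₁⟩
        (-1)
        (by rw [map_neg, map_one])
        (by ring)
        (fun x => by
          show (γ - c γ) * lam (bar x) = -1 * c ((γ - c γ) * lam x)
          rw [hlconj, map_mul, hcα]; ring)
    exact ⟨σ, h1, h2, h3, fun v w => by rw [h4 v w, neg_one_mul], h5, h6⟩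
end

section
/- Let F be a field of characteristic 2 with a nontrivial involution c, and let n ≥ 2. Let J_n ∈ M_n(F) be the unipotent lower Jordan block. Then there exists an invertible c-hermitian matrix H ∈ M_n(F) with J_n^t H J_n = H; that is, the vector space F^n admits a J_n-invariant nondegenerate c-hermitian form (note (J_n)^c = J_n since its entries are 0 and 1). -/
open Matrix

/-- Let `F` be a field of characteristic 2 with a nontrivial involution `c`,
`n ≥ 2`, and let `J` be the unipotent lower Jordan block of size `n`. Then there exists an
invertible `c`-hermitian matrix `H` with `Jᵀ * H * J = H`. -/
theorem jordan_block_invariant_hermitian_form_char_two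
    {F : Type*} [Field F] [CharP F 2] (c : F →+* F) (hc : ∀ x, c (c x) = x)
    (hnt : ∃ x : F, c x ≠ x) (n : ℕ) (hn : 2 ≤ n)
    (J : Matrix (Fin n) (Fin n) F)
    (hJ : ∀ i j : Fin n, J i j =
      if (i : ℕ) = (j : ℕ) then 1 else if (i : ℕ) = (j : ℕ) + 1 then 1 else 0) :
    ∃ H : Matrix (Fin n) (Fin n) F, IsUnit H ∧ Hᵀ = H.map c ∧ Jᵀ * H * J = H := by
  classical
  obtain ⟨δ, hδ⟩ := hnt
  set s : F := δ + c δ with hs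
  have hs0 : s ≠ 0 := by
    intro h
    apply hδ
    have : c δ = -δ := by linear_combination h
    rw [this, CharTwo.neg_eq]
  set l : F := δ / s with hl
  have hcs : c s = s := by simp [hs, map_add, hc, add_comm]
  have hcd : c δ = s + δ := by
    rw [hs]; linear_combination (-1 : F) * CharTwo.add_self_eq_zero δ
  have hcl : c l = 1 + l := by
    have h1 : c l = c δ / s := by rw [hl, map_div₀, hcs]
    rw [h1, hcd, add_div, div_self hs0, hl]
  -- the hermitian matrix
  set H : Matrix (Fin n) (Fin n) F := Matrix.of fun i j =>
    (((n - 1 - (i : ℕ)).choose (j : ℕ) : F)) * l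
      + (((n - 1 - (j : ℕ)).choose (i : ℕ) : F)) * c l with hH
  have hlcl : l + c l = 1 := by
    rw [hcl]; linear_combination CharTwo.add_self_eq_zero l
  refine ⟨H, ?_, ?_, ?_⟩
  · -- invertibility via anti-triangularity
    rw [Matrix.isUnit_iff_isUnit_det, isUnit_iff_ne_zero]
    intro hdet
    have hperm := Matrix.det_permute (Fin.revPerm) H
    have hK : (H.submatrix (Fin.revPerm : Equiv.Perm (Fin n)) id).det = 1 := by
      rw [Matrix.det_of_lowerTriangular]
      · apply Finset.prod_eq_one
        intro i _
        have h2 : ((Fin.revPerm i : Fin n) : ℕ) = n - 1 - (i : ℕ) := by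
          have := i.isLt; simp [Fin.revPerm, Fin.rev]; omega
        simp only [Matrix.submatrix_apply, id_eq, hH, Matrix.of_apply, h2]
        rw [show n - 1 - (n - 1 - (i : ℕ)) = (i : ℕ) from by have := i.isLt; omega,
          Nat.choose_self, Nat.choose_self]
        push_cast
        linear_combination hlcl
      · intro i j hij
        have hij' : (i : ℕ) < (j : ℕ) := hij
        have h2 : ((Fin.revPerm i : Fin n) : ℕ) = n - 1 - (i : ℕ) := by
          have := i.isLt; simp [Fin.revPerm, Fin.rev]; omega
        simp only [Matrix.submatrix_apply, id_eq, hH, Matrix.of_apply, h2]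
        rw [show n - 1 - (n - 1 - (i : ℕ)) = (i : ℕ) from by have := i.isLt; omega,
          Nat.choose_eq_zero_of_lt hij', Nat.choose_eq_zero_of_lt (by
          have := i.isLt; have := j.isLt; omega)]
        simp
    rw [hperm, hdet, mul_zero] at hK
    exact one_ne_zero hK.symm
  · -- hermitian
    ext i j
    simp only [Matrix.transpose_apply, Matrix.map_apply, hH, Matrix.of_apply]
    rw [map_add, _root_.map_mul, _root_.map_mul, map_natCast, map_natCast, hc]
    ring
  · -- invariance
    set N : Matrix (Fin n) (Fin n) F := Matrix.of fun i j =>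
      if (i : ℕ) = (j : ℕ) + 1 then 1 else 0 with hN
    have hJ1N : J = 1 + N := by
      ext i j
      rw [hJ]
      by_cases h : (i : ℕ) = (j : ℕ)
      · have : i = j := Fin.ext h
        subst this
        simp [hN, Matrix.one_apply]
      · have : i ≠ j := fun hh => h (by rw [hh])
        simp [hN, Matrix.one_apply_ne this, h]
    -- single-entry sums
    have hNsum : ∀ (i : Fin n) (v : Fin n → F),
        (∑ a : Fin n, (if (a : ℕ) = (i : ℕ) + 1 then 1 else 0) * v a)
          = if h : (i : ℕ) + 1 < n then v ⟨(i : ℕ) + 1, h⟩ else 0 := by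
      intro i v
      by_cases h : (i : ℕ) + 1 < n
      · rw [dif_pos h]
        rw [Finset.sum_eq_single (⟨(i : ℕ) + 1, h⟩ : Fin n)]
        · simp
        · intro b _ hb
          have : (b : ℕ) ≠ (i : ℕ) + 1 := by
            intro hh; exact hb (Fin.ext hh)
          simp [this]
        · simp
      · rw [dif_neg h]
        apply Finset.sum_eq_zero
        intro a _
        have : (a : ℕ) ≠ (i : ℕ) + 1 := by have := a.isLt; omega
        simp [this]
    -- key numeric facts
    have key1 : ∀ iN jN : ℕ, iN + 1 < n → jN + 1 < n →
        ((((n - 1 - (iN + 1)).choose jN : F)) * l + (((n - 1 - jN).choose (iN + 1) : F)) * c l)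
        + ((((n - 1 - iN).choose (jN + 1) : F)) * l + (((n - 1 - (jN + 1)).choose iN : F)) * c l)
        + ((((n - 1 - (iN + 1)).choose (jN + 1) : F)) * l
            + (((n - 1 - (jN + 1)).choose (iN + 1) : F)) * c l) = 0 := by
      intro iN jN hi hj
      have e1 : n - 1 - iN = (n - 1 - (iN + 1)) + 1 := by omega
      have e2 : n - 1 - jN = (n - 1 - (jN + 1)) + 1 := by omega
      rw [e1, e2]
      rw [Nat.choose_succ_succ (n - 1 - (iN + 1)) jN, Nat.choose_succ_succ (n - 1 - (jN + 1)) iN]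
      push_cast
      have hA : ∀ x : F, x + x = 0 := CharTwo.add_self_eq_zero
      linear_combination (((n - 1 - (iN + 1)).choose jN : F)
          + ((n - 1 - (iN + 1)).choose (jN + 1) : F)) * hA l
        + (((n - 1 - (jN + 1)).choose iN : F)
          + ((n - 1 - (jN + 1)).choose (iN + 1) : F)) * hA (c l)
    have key2 : ∀ iN jN : ℕ, iN + 1 = n → jN < n → 1 ≤ jN →
        (((n - 1 - iN).choose jN : F)) * l + (((n - 1 - jN).choose iN : F)) * c l = 0 := by
      intro iN jN hi hj hj1
      have e1 : n - 1 - iN = 0 := by omega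
      rw [e1, Nat.choose_eq_zero_of_lt (by omega : (0 : ℕ) < jN),
        Nat.choose_eq_zero_of_lt (by omega : n - 1 - jN < iN)]
      simp
    have hzero : Nᵀ * H + H * N + Nᵀ * H * N = 0 := by
      ext i j
      have eNH : ∀ b : Fin n, (Nᵀ * H) i b
          = if h : (i : ℕ) + 1 < n then H ⟨(i : ℕ) + 1, h⟩ b else 0 := by
        intro b
        have h' : (Nᵀ * H) i b
            = ∑ a : Fin n, (if (a : ℕ) = (i : ℕ) + 1 then 1 else 0) * H a b := by
          rw [Matrix.mul_apply]
          apply Finset.sum_congr rfl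
          intro x _
          simp [hN]
        rw [h']
        exact hNsum i (fun a => H a b)
      have eHN : (H * N) i j
          = if h : (j : ℕ) + 1 < n then H i ⟨(j : ℕ) + 1, h⟩ else 0 := by
        have h' : (H * N) i j
            = ∑ x : Fin n, (if (x : ℕ) = (j : ℕ) + 1 then 1 else 0) * H i x := by
          rw [Matrix.mul_apply]
          apply Finset.sum_congr rfl
          intro x _
          simp [hN, mul_comm]
        rw [h']
        exact hNsum j (fun b => H i b)
      have eNHN : (Nᵀ * H * N) i j
          = if h : (j : ℕ) + 1 < n then (Nᵀ * H) i ⟨(j : ℕ) + 1, h⟩ else 0 := by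
        have h' : (Nᵀ * H * N) i j
            = ∑ x : Fin n, (if (x : ℕ) = (j : ℕ) + 1 then 1 else 0) * (Nᵀ * H) i x := by
          rw [Matrix.mul_apply]
          apply Finset.sum_congr rfl
          intro x _
          simp [hN, mul_comm]
        rw [h']
        exact hNsum j (fun b => (Nᵀ * H) i b)
      simp only [Matrix.add_apply, Matrix.zero_apply, eNH j, eHN, eNHN]
      by_cases hi : (i : ℕ) + 1 < n
      · by_cases hj : (j : ℕ) + 1 < n
        · rw [dif_pos hi, dif_pos hj, dif_pos hj, eNH ⟨(j : ℕ) + 1, hj⟩, dif_pos hi]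
          simpa [hH] using key1 (i : ℕ) (j : ℕ) hi hj
        · rw [dif_pos hi, dif_neg hj, dif_neg hj]
          simp only [hH, Matrix.of_apply]
          rw [Nat.choose_eq_zero_of_lt (by have := j.isLt; omega :
              n - 1 - ((i : ℕ) + 1) < (j : ℕ)),
            Nat.choose_eq_zero_of_lt (by have := j.isLt; omega :
              n - 1 - (j : ℕ) < (i : ℕ) + 1)]
          simp
      · by_cases hj : (j : ℕ) + 1 < n
        · rw [dif_neg hi, dif_pos hj, dif_pos hj, eNH ⟨(j : ℕ) + 1, hj⟩, dif_neg hi]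
          simp only [hH, Matrix.of_apply]
          rw [Nat.choose_eq_zero_of_lt (by have := i.isLt; omega :
              n - 1 - (i : ℕ) < (j : ℕ) + 1),
            Nat.choose_eq_zero_of_lt (by have := i.isLt; omega :
              n - 1 - ((j : ℕ) + 1) < (i : ℕ))]
          simp
        · rw [dif_neg hi, dif_neg hj, dif_neg hj]
          simp
    rw [hJ1N]
    have expand : (1 + N)ᵀ * H * (1 + N)
        = H + (Nᵀ * H + H * N + Nᵀ * H * N) := by
      rw [Matrix.transpose_add, Matrix.transpose_one]
      noncomm_ring
    rw [expand, hzero, add_zero]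
end

section
/- Let F be a field with an involution c, and let f(x) = x^k + d_{k−1}x^{k−1} + ⋯ + d_1 x + d_0 be a monic self-dual polynomial of degree k ≥ 2 over F with d_0 ≠ 0 (so d_0 c(d_0) = 1 and d_i c(d_0) = c(d_{k−i}) for 1 ≤ i ≤ k−1). Let C ∈ M_k(F) be the companion matrix of f and let S ∈ M_k(F) be the reversal permutation matrix, S_{ij} = 1 if i + j = k + 1 and S_{ij} = 0 otherwise. Then S^2 = I and S C S^{-1} = (C^c)^{-1}; in particular the companion matrix of a self-dual polynomial is strongly c-real. -/
open Matrix Polynomial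

/-- Let `F` be a field with an involution `c` and let `f` be a monic self-dual
polynomial of degree `k ≥ 2` with `f(0) ≠ 0`. Let `C` be the companion matrix of `f` and
`S` the reversal permutation matrix. Then `S^2 = 1` and `S * C * S⁻¹ = (C^c)⁻¹`; in
particular the companion matrix of a self-dual polynomial is strongly `c`-real. -/
theorem companion_of_self_dual_strongly_c_real
    {F : Type*} [Field F] (c : F →+* F) (hc : ∀ x, c (c x) = x)
    (k : ℕ) (hk : 2 ≤ k)
    (f : Polynomial F) (hmonic : f.Monic) (hdeg : f.natDegree = k)
    (h0 : f.coeff 0 ≠ 0) (hsd : dualPoly c f = f)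
    (C S : Matrix (Fin k) (Fin k) F)
    (hC : ∀ i j : Fin k, C i j =
      if (j : ℕ) = k - 1 then -f.coeff i else if (i : ℕ) = (j : ℕ) + 1 then 1 else 0)
    (hS : ∀ i j : Fin k, S i j = if (i : ℕ) + (j : ℕ) = k - 1 then 1 else 0) :
    S * S = 1 ∧ S * C * S⁻¹ = (C.map c)⁻¹ := by
  have hc0 : c (f.coeff 0) ≠ 0 := fun h => h0 (by simpa [hc] using congrArg c h)
  -- coefficients of the dual polynomial
  have hdual : ∀ i : ℕ, i ≤ k → f.coeff i = (c (f.coeff 0))⁻¹ * c (f.coeff (k - i)) := by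
    intro i hi
    conv_lhs => rw [← hsd]
    have hdm : (f.map c).natDegree = k := by rw [hmonic.natDegree_map, hdeg]
    rw [dualPoly, Polynomial.coeff_smul, Polynomial.coeff_reverse, hdm,
      Polynomial.revAt_le hi, Polynomial.coeff_map, smul_eq_mul]
  have hcoeffk : f.coeff k = 1 := by rw [← hdeg]; exact hmonic.coeff_natDegree
  have hrel0 : f.coeff 0 * c (f.coeff 0) = 1 := by
    have h1 := hdual 0 (by omega)
    rw [Nat.sub_zero, hcoeffk, _root_.map_one, mul_one] at h1
    calc f.coeff 0 * c (f.coeff 0) = (c (f.coeff 0))⁻¹ * c (f.coeff 0) := by rw [← h1]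
    _ = 1 := inv_mul_cancel₀ hc0
  have hrel : ∀ i : ℕ, i ≤ k → c (f.coeff i) * f.coeff 0 = f.coeff (k - i) := by
    intro i hi
    have h1 := congrArg c (hdual i hi)
    rw [_root_.map_mul, map_inv₀, hc, hc] at h1
    rw [h1]
    field_simp
  -- S in terms of Fin.rev
  have hrev : ∀ i j : Fin k, S i j = if j = i.rev then 1 else 0 := by
    intro i j
    rw [hS]
    have hi := i.isLt; have hj := j.isLt
    have : ((i : ℕ) + (j : ℕ) = k - 1) ↔ j = i.rev := by
      rw [Fin.ext_iff, Fin.val_rev]; omega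
    simp only [this]
  have hSl : ∀ (A : Matrix (Fin k) (Fin k) F) (i j : Fin k), (S * A) i j = A i.rev j := by
    intro A i j
    rw [Matrix.mul_apply, Finset.sum_eq_single i.rev]
    · rw [hrev]; simp
    · intro b _ hb; rw [hrev]; simp [hb]
    · simp
  have hSr : ∀ (A : Matrix (Fin k) (Fin k) F) (i j : Fin k), (A * S) i j = A i j.rev := by
    intro A i j
    rw [Matrix.mul_apply, Finset.sum_eq_single j.rev]
    · rw [hrev, Fin.rev_rev]; simp
    · intro b _ hb
      have : j ≠ b.rev := fun h => hb (by rw [h, Fin.rev_rev])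
      rw [hrev]; simp [this]
    · simp
  have hSS : S * S = 1 := by
    ext i j
    rw [hSl, hrev, Fin.rev_rev, Matrix.one_apply]
    simp [eq_comm]
  refine ⟨hSS, ?_⟩
  rw [Matrix.inv_eq_right_inv hSS]
  -- the conjugated matrix
  have hM : ∀ i j : Fin k, (S * C * S) i j = C i.rev j.rev := by
    intro i j; rw [hSr, hSl]
  -- the last index
  set last : Fin k := ⟨k - 1, by omega⟩ with hlast
  have hlv : (last : ℕ) = k - 1 := rfl
  have hDsplit : ∀ i l : Fin k, (C.map c) i l =
      (if l = last then -c (f.coeff i) else 0) +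
      (if (i : ℕ) = (l : ℕ) + 1 then 1 else 0) := by
    intro i l
    have hi := i.isLt
    have hll := l.isLt
    have he : l = last ↔ (l : ℕ) = k - 1 := by rw [Fin.ext_iff, hlv]
    rw [Matrix.map_apply, hC, apply_ite c, apply_ite c, map_neg, _root_.map_one, map_zero]
    by_cases h1 : (l : ℕ) = k - 1
    · rw [if_pos h1, if_pos (he.mpr h1), if_neg (by omega : ¬ (i : ℕ) = (l : ℕ) + 1), add_zero]
    · rw [if_neg h1, if_neg (fun h => h1 (he.mp h)), zero_add]
  symm
  apply Matrix.inv_eq_right_inv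
  ext i j
  rw [Matrix.mul_apply]
  have hjlt := j.isLt; have hilt := i.isLt
  have hjr : ((j.rev : Fin k) : ℕ) = k - 1 - (j : ℕ) := by rw [Fin.val_rev]; omega
  have hMlast : (S * C * S) last j = if (j : ℕ) = 0 then -f.coeff 0 else 0 := by
    rw [hM, hC]
    have h1 : ((last.rev : Fin k) : ℕ) = 0 := by rw [Fin.val_rev, hlv]; omega
    rw [h1, hjr]
    by_cases h3 : (j : ℕ) = 0
    · rw [if_pos (by omega), if_pos h3]
    · rw [if_neg (by omega), if_neg (by omega), if_neg h3]
  have hsum : ∑ l, (C.map c) i l * (S * C * S) l j =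
      (-c (f.coeff i)) * (S * C * S) last j +
      ∑ l, (if (i : ℕ) = l.val + 1 then (S * C * S) l j else 0) := by
    calc ∑ l, (C.map c) i l * (S * C * S) l j
        = ∑ l, ((if l = last then -c (f.coeff i) * (S * C * S) l j else 0)
             + (if (i : ℕ) = l.val + 1 then (S * C * S) l j else 0)) := by
          refine Finset.sum_congr rfl fun l _ => ?_
          rw [hDsplit, add_mul, ite_mul, ite_mul, zero_mul, one_mul]
      _ = _ := by
          rw [Finset.sum_add_distrib, Finset.sum_ite_eq' Finset.univ last
            (fun l => -c (f.coeff i) * (S * C * S) l j), if_pos (Finset.mem_univ last)]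
  rw [hsum, hMlast]
  by_cases hi0 : (i : ℕ) = 0
  · have hz : ∀ l : Fin k, (if (i : ℕ) = l.val + 1 then (S * C * S) l j else 0) = 0 :=
      fun l => if_neg (by omega)
    rw [Finset.sum_congr rfl fun l _ => hz l, Finset.sum_const_zero, add_zero,
      Matrix.one_apply, hi0]
    by_cases h3 : (j : ℕ) = 0
    · rw [if_pos h3, if_pos (Fin.ext (by omega) : i = j), neg_mul_neg, mul_comm, hrel0]
    · rw [if_neg h3, if_neg (by rw [Fin.ext_iff]; omega : ¬ i = j), mul_zero]
  · set ip : Fin k := ⟨(i : ℕ) - 1, by omega⟩ with hip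
    have hipv : (ip : ℕ) = (i : ℕ) - 1 := rfl
    have hsum2 : ∑ l, (if (i : ℕ) = l.val + 1 then (S * C * S) l j else 0)
        = (S * C * S) ip j := by
      have hcond : ∀ l : Fin k, ((i : ℕ) = (l : ℕ) + 1) ↔ l = ip := by
        intro l; rw [Fin.ext_iff, hipv]; have := l.isLt; omega
      rw [Finset.sum_congr rfl fun l _ => if_congr (hcond l) rfl rfl,
        Finset.sum_ite_eq' Finset.univ ip, if_pos (Finset.mem_univ ip)]
    have hMip : (S * C * S) ip j =
        if (j : ℕ) = 0 then -f.coeff (k - (i : ℕ)) else if i = j then 1 else 0 := by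
      rw [hM, hC]
      have h1 : ((ip.rev : Fin k) : ℕ) = k - (i : ℕ) := by rw [Fin.val_rev, hipv]; omega
      rw [h1, hjr]
      by_cases h3 : (j : ℕ) = 0
      · rw [if_pos (by omega), if_pos h3]
      · by_cases h4 : i = j
        · have h4' : (i : ℕ) = (j : ℕ) := by rw [h4]
          rw [if_neg (by omega), if_pos (by omega), if_neg h3, if_pos h4]
        · have h4' : (i : ℕ) ≠ (j : ℕ) := fun h => h4 (Fin.ext h)
          rw [if_neg (by omega), if_neg (by omega), if_neg h3, if_neg h4]
    rw [hsum2, hMip, Matrix.one_apply]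
    by_cases h3 : (j : ℕ) = 0
    · rw [if_pos h3, if_pos h3, if_neg (by rw [Fin.ext_iff]; omega : ¬ i = j),
        neg_mul_neg, hrel (i : ℕ) (by omega), add_neg_cancel]
    · rw [if_neg h3, if_neg h3, mul_zero, zero_add]
end

section
/- Let F be a field with an involution c, let f be a monic polynomial of degree k ≥ 2 over F with f(0) ≠ 0, and let C ∈ M_k(F) be the companion matrix of f. If H ∈ M_k(F) satisfies (C^c)^t H C = H, then H is a Toeplitz matrix: H_{i+1,j+1} = H_{i,j} for all 1 ≤ i, j ≤ k−1. -/
open Matrix Polynomial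

/-- Let `F` be a field with an involution `c`, `f` a monic polynomial of
degree `k ≥ 2` with `f(0) ≠ 0`, and `C` the companion matrix of `f`. If `H` satisfies
`(C^c)ᵀ * H * C = H`, then `H` is a Toeplitz matrix: `H_{i+1,j+1} = H_{i,j}`. -/
theorem invariant_form_of_companion_is_toeplitz
    {F : Type*} [Field F] (c : F →+* F) (hc : ∀ x, c (c x) = x)
    (k : ℕ) (hk : 2 ≤ k)
    (f : Polynomial F) (hmonic : f.Monic) (hdeg : f.natDegree = k) (h0 : f.coeff 0 ≠ 0)
    (C : Matrix (Fin k) (Fin k) F)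
    (hC : ∀ i j : Fin k, C i j =
      if (j : ℕ) = k - 1 then -f.coeff i else if (i : ℕ) = (j : ℕ) + 1 then 1 else 0)
    (H : Matrix (Fin k) (Fin k) F)
    (hH : (C.map c)ᵀ * H * C = H) :
    ∀ (i j : Fin k) (hi : (i : ℕ) + 1 < k) (hj : (j : ℕ) + 1 < k),
      H ⟨(i : ℕ) + 1, hi⟩ ⟨(j : ℕ) + 1, hj⟩ = H i j := by
  intro i j hi hj
  have hik : (i : ℕ) ≠ k - 1 := by omega
  have hjk : (j : ℕ) ≠ k - 1 := by omega
  have hCi : ∀ p : Fin k, C p i = if (p : ℕ) = (i : ℕ) + 1 then 1 else 0 := by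
    intro p; rw [hC]; simp [hik]
  have hCj : ∀ q : Fin k, C q j = if (q : ℕ) = (j : ℕ) + 1 then 1 else 0 := by
    intro q; rw [hC]; simp [hjk]
  have key := congrFun (congrFun hH i) j
  simp only [mul_apply, transpose_apply, map_apply] at key
  have inner : ∀ q : Fin k, (∑ p, c (C p i) * H p q) = H ⟨(i : ℕ) + 1, hi⟩ q := by
    intro q
    rw [Finset.sum_eq_single (⟨(i : ℕ) + 1, hi⟩ : Fin k)]
    · rw [hCi]; simp
    · intro p _ hp
      rw [hCi, if_neg]
      · simp
      · intro h; exact hp (Fin.ext h)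
    · simp
  rw [← key]
  simp only [inner]
  rw [Finset.sum_eq_single (⟨(j : ℕ) + 1, hj⟩ : Fin k)]
  · rw [hCj]; simp
  · intro q _ hq
    rw [hCj, if_neg]
    · simp
    · intro h; exact hq (Fin.ext h)
  · simp
end

section
/- Let F be a field of characteristic 2 with an involution c, let n ≥ 2, and let J_n ∈ M_n(F) be the unipotent lower Jordan block. If H ∈ M_n(F) satisfies J_n^t H J_n = H, then: (a) H_{i,j+1} + H_{i+1,j} + H_{i+1,j+1} = 0 for all 1 ≤ i, j ≤ n−1, and (b) H_{ij} = 0 whenever i + j ≥ n + 2; in particular H is anti-lower-triangular. -/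
open Matrix

/-- Let `F` be a field of characteristic 2 with an involution `c`, `n ≥ 2`,
and `J` the unipotent lower Jordan block of size `n`. If `Jᵀ * H * J = H` then (a)
`H_{i,j+1} + H_{i+1,j} + H_{i+1,j+1} = 0` and (b) `H_{ij} = 0` whenever (in 1-indexed
terms) `i + j ≥ n + 2` (0-indexed: `i + j ≥ n`); in particular `H` is
anti-lower-triangular. -/
theorem invariant_form_of_jordan_block_char_two
    {F : Type*} [Field F] [CharP F 2] (c : F →+* F) (hc : ∀ x, c (c x) = x)
    (n : ℕ) (hn : 2 ≤ n)
    (J : Matrix (Fin n) (Fin n) F)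
    (hJ : ∀ i j : Fin n, J i j =
      if (i : ℕ) = (j : ℕ) then 1 else if (i : ℕ) = (j : ℕ) + 1 then 1 else 0)
    (H : Matrix (Fin n) (Fin n) F)
    (hH : Jᵀ * H * J = H) :
    (∀ (i j : Fin n) (hi : (i : ℕ) + 1 < n) (hj : (j : ℕ) + 1 < n),
      H i ⟨(j : ℕ) + 1, hj⟩ + H ⟨(i : ℕ) + 1, hi⟩ j
        + H ⟨(i : ℕ) + 1, hi⟩ ⟨(j : ℕ) + 1, hj⟩ = 0) ∧
    (∀ i j : Fin n, n ≤ (i : ℕ) + (j : ℕ) → H i j = 0) := by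
  -- sum helper
  have sum1 : ∀ (i : Fin n) (f : Fin n → F),
      (∑ k, J k i * f k) = f i + (if h : (i : ℕ) + 1 < n then f ⟨(i : ℕ) + 1, h⟩ else 0) := by
    intro i f
    by_cases hi : (i : ℕ) + 1 < n
    · rw [dif_pos hi]
      have e : ∀ k : Fin n, J k i * f k =
          (if k = i then f k else 0) + (if k = (⟨(i : ℕ) + 1, hi⟩ : Fin n) then f k else 0) := by
        intro k
        rw [hJ]
        simp only [Fin.ext_iff]
        split_ifs <;> simp_all <;> omega
      simp only [e, Finset.sum_add_distrib, Finset.sum_ite_eq', Finset.mem_univ, if_true]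
    · rw [dif_neg hi]
      have e : ∀ k : Fin n, J k i * f k = (if k = i then f k else 0) := by
        intro k
        rw [hJ]
        simp only [Fin.ext_iff]
        have := k.isLt
        split_ifs <;> simp_all <;> omega
      simp only [e, Finset.sum_ite_eq', Finset.mem_univ, if_true, add_zero]
  -- main equation
  have main : ∀ i j : Fin n,
      (if h : (i : ℕ) + 1 < n then H ⟨(i : ℕ) + 1, h⟩ j else 0)
      + (if h : (j : ℕ) + 1 < n then
          H i ⟨(j : ℕ) + 1, h⟩ +
            (if h' : (i : ℕ) + 1 < n then H ⟨(i : ℕ) + 1, h'⟩ ⟨(j : ℕ) + 1, h⟩ else 0)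
        else 0) = 0 := by
    intro i j
    have hent := congrFun (congrFun hH i) j
    have h1 : (Jᵀ * H * J) i j
        = ∑ l, J l j * (∑ k, J k i * H k l) := by
      simp only [Matrix.mul_apply, Matrix.transpose_apply, Finset.sum_mul]
      apply Finset.sum_congr rfl
      intro l _
      rw [Finset.mul_sum]
      apply Finset.sum_congr rfl
      intro k _
      ring
    rw [h1, sum1 j (fun l => ∑ k, J k i * H k l)] at hent
    simp only [sum1 i] at hent
    apply add_left_cancel (a := H i j)
    rw [add_zero, ← add_assoc]
    exact hent
  have parta : ∀ (i j : Fin n) (hi : (i : ℕ) + 1 < n) (hj : (j : ℕ) + 1 < n),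
      H i ⟨(j : ℕ) + 1, hj⟩ + H ⟨(i : ℕ) + 1, hi⟩ j
        + H ⟨(i : ℕ) + 1, hi⟩ ⟨(j : ℕ) + 1, hj⟩ = 0 := by
    intro i j hi hj
    have h := main i j
    rw [dif_pos hi, dif_pos hj, dif_pos hi] at h
    rw [show H i ⟨(j : ℕ) + 1, hj⟩ + H ⟨(i : ℕ) + 1, hi⟩ j + H ⟨(i : ℕ) + 1, hi⟩ ⟨(j : ℕ) + 1, hj⟩
      = H ⟨(i : ℕ) + 1, hi⟩ j + (H i ⟨(j : ℕ) + 1, hj⟩ + H ⟨(i : ℕ) + 1, hi⟩ ⟨(j : ℕ) + 1, hj⟩)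
      from by ring, h]
  have bd : ∀ (i j : Fin n), (i : ℕ) = n - 1 → 1 ≤ (j : ℕ) → H i j = 0 := by
    intro i j hi hj
    have hjlt := j.isLt
    set j' : Fin n := ⟨(j : ℕ) - 1, by omega⟩ with hj'def
    have hj'1 : (j' : ℕ) + 1 < n := by simp only [hj'def]; omega
    have h := main i j'
    rw [dif_neg (by omega), dif_pos hj'1, dif_neg (by omega)] at h
    have hjj : (⟨(j' : ℕ) + 1, hj'1⟩ : Fin n) = j := by
      apply Fin.ext; simp only [hj'def]; omega
    rw [hjj] at h
    simpa using h
  have zero : ∀ t : ℕ, ∀ i j : Fin n, n - 1 - (i : ℕ) ≤ t → n ≤ (i : ℕ) + (j : ℕ) → H i j = 0 := by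
    intro t
    induction t with
    | zero =>
      intro i j h1 h2
      have := i.isLt
      exact bd i j (by omega) (by omega)
    | succ t ih =>
      intro i j h1 h2
      have hilt := i.isLt
      have hjlt := j.isLt
      by_cases hcase : (i : ℕ) = n - 1
      · exact bd i j hcase (by omega)
      · have hi : (i : ℕ) + 1 < n := by omega
        have hj1 : 1 ≤ (j : ℕ) := by omega
        set j' : Fin n := ⟨(j : ℕ) - 1, by omega⟩ with hj'def
        have hj'1 : (j' : ℕ) + 1 < n := by simp only [hj'def]; omega
        have h := main i j'
        rw [dif_pos hi, dif_pos hj'1, dif_pos hi] at h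
        have hjj : (⟨(j' : ℕ) + 1, hj'1⟩ : Fin n) = j := by
          apply Fin.ext; simp only [hj'def]; omega
        rw [hjj] at h
        have z1 := ih ⟨(i : ℕ) + 1, hi⟩ j'
          (show n - 1 - ((i : ℕ) + 1) ≤ t by omega)
          (show n ≤ ((i : ℕ) + 1) + ((j : ℕ) - 1) by omega)
        have z2 := ih ⟨(i : ℕ) + 1, hi⟩ j
          (show n - 1 - ((i : ℕ) + 1) ≤ t by omega)
          (show n ≤ ((i : ℕ) + 1) + (j : ℕ) by omega)
        rw [z1, z2] at h
        simpa using h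
  exact ⟨parta, fun i j h => zero n i j (by omega) h⟩
end
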